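/- For A, B positive semidefinite forming a monotone pair and any unit vector h, ‖Ah‖·‖Bh‖ ≤ ‖ABh‖ and ⟨h, Ah⟩·⟨h, Bh⟩ ≤ ⟨h, ABh⟩. -/

import Mathlib

open Matrix ComplexOrder

lemma cheb_aux {n : ℕ} (p x y : Fin n → ℝ) (hp : ∀ i, 0 ≤ p i) (hps : ∑ i, p i = 1)
    (hxy : ∀ i j, 0 ≤ (x i - x j) * (y i - y j)) :
    (∑ i, x i * p i) * (∑ i, y i * p i) ≤ ∑ i, x i * y i * p i := by
  have key : (0:ℝ) ≤ ∑ i, ∑ j, p i * p j * ((x i - x j) * (y i - y j)) :=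
    Finset.sum_nonneg fun i _ => Finset.sum_nonneg fun j _ =>
      mul_nonneg (mul_nonneg (hp i) (hp j)) (hxy i j)
  have expand : ∑ i, ∑ j, p i * p j * ((x i - x j) * (y i - y j))
      = 2 * (∑ i, x i * y i * p i) * (∑ i, p i)
        - 2 * ((∑ i, x i * p i) * (∑ i, y i * p i)) := by
    have step : ∀ i : Fin n, ∑ j, p i * p j * ((x i - x j) * (y i - y j))
        = (x i * y i * p i) * (∑ j, p j) + (∑ j, x j * y j * p j) * p i
          - (x i * p i) * (∑ j, y j * p j) - (y i * p i) * (∑ j, x j * p j) := by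
      intro i
      calc ∑ j, p i * p j * ((x i - x j) * (y i - y j))
          = ∑ j, ((x i * y i * p i) * p j + (x j * y j * p j) * p i
              - (x i * p i) * (y j * p j) - (y i * p i) * (x j * p j)) :=
            Finset.sum_congr rfl fun j _ => by ring
        _ = _ := by
            rw [Finset.sum_sub_distrib, Finset.sum_sub_distrib, Finset.sum_add_distrib,
              ← Finset.mul_sum, ← Finset.sum_mul, ← Finset.mul_sum, ← Finset.mul_sum]
    rw [Finset.sum_congr rfl fun i _ => step i, Finset.sum_sub_distrib,
      Finset.sum_sub_distrib, Finset.sum_add_distrib, ← Finset.sum_mul, ← Finset.mul_sum,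
      ← Finset.sum_mul, ← Finset.sum_mul]
    ring
  rw [expand, hps] at key
  linarith

/-- Apply a real function to a Hermitian matrix via the spectral decomposition. -/
noncomputable def hermFun {n : ℕ} {C : Matrix (Fin n) (Fin n) ℂ} (hC : C.IsHermitian)
    (f : ℝ → ℝ) : Matrix (Fin n) (Fin n) ℂ :=
  (hC.eigenvectorUnitary : Matrix (Fin n) (Fin n) ℂ) *
    Matrix.diagonal (fun i => (f (hC.eigenvalues i) : ℂ)) *
    (star (hC.eigenvectorUnitary : Matrix (Fin n) (Fin n) ℂ))

/-- `(A, B)` is a monotone pair: `A = f(C)`, `B = g(C)` for a Hermitian `C` and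
nondecreasing real functions `f`, `g`. -/
def MonotonePair {n : ℕ} (A B : Matrix (Fin n) (Fin n) ℂ) : Prop :=
  ∃ C : Matrix (Fin n) (Fin n) ℂ, ∃ hC : C.IsHermitian, ∃ f g : ℝ → ℝ,
    Monotone f ∧ Monotone g ∧ A = hermFun hC f ∧ B = hermFun hC g

/-- `(A, B)` is an antimonotone pair: `A = f(C)`, `B = g(C)` for a Hermitian `C`,
`f` nondecreasing and `g` nonincreasing. -/
def AntimonotonePair {n : ℕ} (A B : Matrix (Fin n) (Fin n) ℂ) : Prop :=
  ∃ C : Matrix (Fin n) (Fin n) ℂ, ∃ hC : C.IsHermitian, ∃ f g : ℝ → ℝ,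
    Monotone f ∧ Antitone g ∧ A = hermFun hC f ∧ B = hermFun hC g

/-- The Frobenius (Hilbert–Schmidt) norm `(Tr X*X)^(1/2)`. -/
noncomputable def frobNorm {n : ℕ} (X : Matrix (Fin n) (Fin n) ℂ) : ℝ :=
  Real.sqrt ((Matrix.trace (Xᴴ * X)).re)

theorem chebyshev_vector_inequalities {n : ℕ} (A B : Matrix (Fin n) (Fin n) ℂ)
    (hA : A.PosSemidef) (hB : B.PosSemidef) (hmono : MonotonePair A B)
    (h : EuclideanSpace ℂ (Fin n)) (hh : ‖h‖ = 1) :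
    ‖Matrix.toEuclideanLin A h‖ * ‖Matrix.toEuclideanLin B h‖ ≤
        ‖Matrix.toEuclideanLin (A * B) h‖ ∧
      (inner ℂ h (Matrix.toEuclideanLin A h) : ℂ).re *
          (inner ℂ h (Matrix.toEuclideanLin B h) : ℂ).re ≤
        (inner ℂ h (Matrix.toEuclideanLin (A * B) h) : ℂ).re := by
  obtain ⟨C, hC, f, g, hf, hg, hAe, hBe⟩ := hmono
  set U : Matrix (Fin n) (Fin n) ℂ := (hC.eigenvectorUnitary : Matrix (Fin n) (Fin n) ℂ) with hUdef
  have hU1 : star U * U = 1 := Unitary.coe_star_mul_self hC.eigenvectorUnitary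
  have hU2 : U * star U = 1 := Unitary.coe_mul_star_self hC.eigenvectorUnitary
  set hv : Fin n → ℂ := (WithLp.equiv 2 (Fin n → ℂ)) h with hhvdef
  set v : Fin n → ℂ := star U *ᵥ hv with hvdef
  have hhv : U *ᵥ v = hv := by
    rw [hvdef, Matrix.mulVec_mulVec, hU2, Matrix.one_mulVec]
  have dotU : ∀ w z : Fin n → ℂ, star (U *ᵥ w) ⬝ᵥ (U *ᵥ z) = star w ⬝ᵥ z := by
    intro w z
    have hU1c : Uᴴ * U = 1 := by rw [← Matrix.star_eq_conjTranspose]; exact hU1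
    rw [Matrix.star_mulVec, Matrix.dotProduct_mulVec, Matrix.vecMul_vecMul, hU1c,
      Matrix.vecMul_one]
  have hfact : ∀ d : Fin n → ℂ, (U * Matrix.diagonal d * star U) *ᵥ hv
      = U *ᵥ (fun i => d i * v i) := by
    intro d
    rw [← Matrix.mulVec_mulVec, ← Matrix.mulVec_mulVec, ← hvdef]
    rw [show (Matrix.diagonal d *ᵥ v) = fun i => d i * v i from
      funext fun i => Matrix.mulVec_diagonal d v i]
  have sumsq : ∀ z : Fin n → ℂ, star z ⬝ᵥ z = ((∑ i, Complex.normSq (z i) : ℝ) : ℂ) := by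
    intro z
    push_cast
    exact Finset.sum_congr rfl fun i _ => by
      simp [dotProduct, Complex.normSq_eq_conj_mul_self]
  have keyI : ∀ d : Fin n → ℝ,
      (inner ℂ h (Matrix.toEuclideanLin
        (U * Matrix.diagonal (fun i => (d i : ℂ)) * star U) h) : ℂ)
      = ((∑ i, d i * Complex.normSq (v i) : ℝ) : ℂ) := by
    intro d
    rw [EuclideanSpace.inner_eq_star_dotProduct, Matrix.ofLp_toEuclideanLin_apply, dotProduct_comm,
      show h.ofLp = hv from rfl, hfact, ← hhv, dotU]
    have e1 : ∀ i, star (v i) * ((d i : ℂ) * v i)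
        = ((d i * Complex.normSq (v i) : ℝ) : ℂ) := by
      intro i
      rw [Complex.star_def, Complex.ofReal_mul, Complex.normSq_eq_conj_mul_self]; ring
    simp only [dotProduct, Pi.star_apply, e1]
    push_cast
    rfl
  have keyN : ∀ d : Fin n → ℝ,
      ‖Matrix.toEuclideanLin (U * Matrix.diagonal (fun i => (d i : ℂ)) * star U) h‖
      = Real.sqrt (∑ i, (d i)^2 * Complex.normSq (v i)) := by
    intro d
    rw [EuclideanSpace.norm_eq]
    congr 1
    have e : Matrix.toEuclideanLin (U * Matrix.diagonal (fun i => (d i:ℂ)) * star U) h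
        = (WithLp.equiv 2 (Fin n → ℂ)).symm (U *ᵥ fun i => (d i:ℂ) * v i) := by
      rw [Matrix.toEuclideanLin_apply]; exact congrArg (WithLp.toLp 2) (hfact _)
    rw [e]
    have unit : ∑ i, Complex.normSq ((U *ᵥ fun i => (d i:ℂ) * v i) i)
        = ∑ i, Complex.normSq ((d i:ℂ) * v i) := by
      have h1 := dotU (fun i => (d i:ℂ) * v i) (fun i => (d i:ℂ) * v i)
      rw [sumsq, sumsq] at h1
      exact_mod_cast h1
    calc ∑ i, ‖((WithLp.equiv 2 (Fin n → ℂ)).symm (U *ᵥ fun i => (d i:ℂ) * v i)) i‖^2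
        = ∑ i, Complex.normSq ((U *ᵥ fun i => (d i:ℂ) * v i) i) :=
          Finset.sum_congr rfl fun i _ => by
            exact Complex.sq_norm _
      _ = ∑ i, Complex.normSq ((d i:ℂ) * v i) := unit
      _ = ∑ i, (d i)^2 * Complex.normSq (v i) := Finset.sum_congr rfl fun i _ => by
            rw [Complex.normSq_mul, Complex.normSq_ofReal]; ring
  have hdiag : ∀ d : Fin n → ℂ,
      star U * (U * Matrix.diagonal d * star U) * U = Matrix.diagonal d := by
    intro d
    calc star U * (U * Matrix.diagonal d * star U) * U
        = (star U * U) * Matrix.diagonal d * (star U * U) := by noncomm_ring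
      _ = Matrix.diagonal d := by rw [hU1, one_mul, mul_one]
  have nonneg_of : ∀ d : Fin n → ℝ,
      (U * Matrix.diagonal (fun i => (d i:ℂ)) * star U).PosSemidef → ∀ i, 0 ≤ d i := by
    intro d hM i
    have h1 := hM.conjTranspose_mul_mul_same U
    rw [← Matrix.star_eq_conjTranspose, hdiag] at h1
    exact Complex.zero_le_real.mp ((Matrix.posSemidef_diagonal_iff.mp h1) i)
  have hABmul : ∀ d e : Fin n → ℂ,
      (U * Matrix.diagonal d * star U) * (U * Matrix.diagonal e * star U)
      = U * Matrix.diagonal (fun i => d i * e i) * star U := by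
    intro d e
    calc (U * Matrix.diagonal d * star U) * (U * Matrix.diagonal e * star U)
        = U * (Matrix.diagonal d * ((star U * U) * Matrix.diagonal e)) * star U := by
          noncomm_ring
      _ = U * Matrix.diagonal (fun i => d i * e i) * star U := by
          rw [hU1, one_mul, Matrix.diagonal_mul_diagonal]
  have hps : ∑ i, Complex.normSq (v i) = 1 := by
    have h1 := dotU v v
    rw [hhv, sumsq, sumsq] at h1
    have h2 : ∑ i, Complex.normSq (hv i) = 1 := by
      have h4 : Real.sqrt (∑ i, ‖h i‖^2) = 1 := by rw [← EuclideanSpace.norm_eq]; exact hh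
      have h5 := Real.sqrt_eq_one.mp h4
      rw [← h5]
      exact Finset.sum_congr rfl fun i _ => by
        rw [show hv i = h i from rfl, ← Complex.sq_norm]
    have h3 : ∑ i, Complex.normSq (hv i) = ∑ i, Complex.normSq (v i) := by exact_mod_cast h1
    rw [← h3, h2]
  obtain ⟨a, ha⟩ : ∃ a : Fin n → ℝ, a = fun i => f (hC.eigenvalues i) := ⟨_, rfl⟩
  obtain ⟨b, hb⟩ : ∃ b : Fin n → ℝ, b = fun i => g (hC.eigenvalues i) := ⟨_, rfl⟩
  have hAe' : A = U * Matrix.diagonal (fun i => (a i : ℂ)) * star U := by rw [ha]; exact hAe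
  have hBe' : B = U * Matrix.diagonal (fun i => (b i : ℂ)) * star U := by rw [hb]; exact hBe
  have hAnn : ∀ i, 0 ≤ a i := nonneg_of a (hAe' ▸ hA)
  have hBnn : ∀ i, 0 ≤ b i := nonneg_of b (hBe' ▸ hB)
  have hABe' : A * B = U * Matrix.diagonal (fun i => ((a i * b i : ℝ) : ℂ)) * star U := by
    rw [hAe', hBe', hABmul]
    congr 1
    congr 1
    funext i
    push_cast
    ring
  have hpnn : ∀ i, 0 ≤ Complex.normSq (v i) := fun i => Complex.normSq_nonneg _
  have hord1 : ∀ i j, 0 ≤ (a i - a j) * (b i - b j) := by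
    intro i j
    rcases le_total (hC.eigenvalues i) (hC.eigenvalues j) with hle | hle
    · have h1 : a i ≤ a j := by rw [ha]; exact hf hle
      have h2 : b i ≤ b j := by rw [hb]; exact hg hle
      nlinarith
    · have h1 : a j ≤ a i := by rw [ha]; exact hf hle
      have h2 : b j ≤ b i := by rw [hb]; exact hg hle
      nlinarith
  have hord2 : ∀ i j, 0 ≤ (a i ^ 2 - a j ^ 2) * (b i ^ 2 - b j ^ 2) := by
    intro i j
    have h1 := hord1 i j
    have h2 := hAnn i; have h3 := hAnn j; have h4 := hBnn i; have h5 := hBnn j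
    nlinarith [mul_nonneg (mul_nonneg h2 h4) (mul_nonneg h3 h5),
      mul_nonneg h2 h5, mul_nonneg h3 h4, mul_nonneg h2 h4, mul_nonneg h3 h5]
  constructor
  · rw [hABe', hAe', hBe', keyN a, keyN b, keyN (fun i => a i * b i)]
    have hs1 : (0:ℝ) ≤ ∑ i, a i ^ 2 * Complex.normSq (v i) :=
      Finset.sum_nonneg fun i _ => mul_nonneg (sq_nonneg _) (hpnn i)
    rw [← Real.sqrt_mul hs1]
    apply Real.sqrt_le_sqrt
    calc (∑ i, a i ^ 2 * Complex.normSq (v i)) * ∑ i, b i ^ 2 * Complex.normSq (v i)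
        ≤ ∑ i, a i ^ 2 * b i ^ 2 * Complex.normSq (v i) :=
          cheb_aux _ (fun i => a i ^ 2) (fun i => b i ^ 2) hpnn hps hord2
      _ = ∑ i, (a i * b i) ^ 2 * Complex.normSq (v i) :=
          Finset.sum_congr rfl fun i _ => by ring
  · rw [hABe', hAe', hBe', keyI a, keyI b, keyI (fun i => a i * b i),
      Complex.ofReal_re, Complex.ofReal_re, Complex.ofReal_re]
    exact cheb_aux _ a b hpnn hps hord1
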